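/- Suppose Φ : Ω → ℝ^n is a homeomorphism onto its image, defined on an open set Ω ⊆ ℝ^n, which maps Lebesgue null sets to null sets and is approximately differentiable almost everywhere. Then for every nonnegative measurable function g : Ω → [0,∞], ∫_Ω g(x)|det ap DΦ(x)| dx = ∫_{Φ(Ω)} g(Φ^{-1}(y)) dy. -/

import Mathlib

open MeasureTheory Metric Set Filter Topology ENNReal

noncomputable section

abbrev Euc (n : ℕ) := EuclideanSpace ℝ (Fin n)

def DensityPt {n : ℕ} (S : Set (Euc n)) (x : Euc n) : Prop :=
  Tendsto (fun ρ : ℝ => volume (S ∩ ball x ρ) / volume (ball x ρ)) (𝓝[>] 0) (𝓝 1)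

def HasApproxDerivAt {n : ℕ} (f : Euc n → Euc n) (L : Euc n →L[ℝ] Euc n) (x : Euc n) : Prop :=
  ∃ S : Set (Euc n), MeasurableSet S ∧ DensityPt S x ∧
    Tendsto (fun y => ‖f y - f x - L (y - x)‖ / ‖y - x‖) (𝓝[S \ {x}] x) (𝓝 0)

namespace CVProof

variable {n : ℕ}

lemma vol_ball (x : Euc n) {r : ℝ} (hr : 0 < r) :
    volume (ball x r) = ENNReal.ofReal (r ^ n) * volume (ball (0 : Euc n) 1) := by
  simpa [finrank_euclideanSpace_fin] using
    Measure.addHaar_ball_of_pos (volume : Measure (Euc n)) x hr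

lemma vol_ball_ne_zero (x : Euc n) {r : ℝ} (hr : 0 < r) : volume (ball x r) ≠ 0 :=
  (measure_ball_pos volume x hr).ne'

lemma vol_ball_ne_top (x : Euc n) (r : ℝ) : volume (ball x r) ≠ ∞ :=
  measure_ball_lt_top.ne

lemma vol_closedBall_eq (x : Euc n) {r : ℝ} (hr : 0 < r) :
    volume (closedBall x r) = volume (ball x r) := by
  refine le_antisymm ?_ (measure_mono ball_subset_closedBall)
  calc volume (closedBall x r) ≤ volume (ball x r ∪ sphere x r) := by
        rw [ball_union_sphere]
    _ ≤ volume (ball x r) + volume (sphere x r) := measure_union_le _ _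
    _ = volume (ball x r) := by
        rw [Measure.addHaar_sphere_of_ne_zero volume x hr.ne', add_zero]

lemma vol_inter_closedBall_eq (s : Set (Euc n)) (x : Euc n) {r : ℝ} (hr : 0 < r) :
    volume (s ∩ closedBall x r) = volume (s ∩ ball x r) := by
  refine le_antisymm ?_ (measure_mono (inter_subset_inter_right _ ball_subset_closedBall))
  calc volume (s ∩ closedBall x r) ≤ volume ((s ∩ ball x r) ∪ sphere x r) := by
        refine measure_mono fun y hy => ?_
        rcases ((ball_union_sphere (x := x) (ε := r)) ▸ hy.2 : y ∈ ball x r ∪ sphere x r) with h | h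
        · exact Or.inl ⟨hy.1, h⟩
        · exact Or.inr h
    _ ≤ volume (s ∩ ball x r) + volume (sphere x r) := measure_union_le _ _
    _ = volume (s ∩ ball x r) := by
        rw [Measure.addHaar_sphere_of_ne_zero volume x hr.ne', add_zero]

lemma ae_densityPt (F : Set (Euc n)) : ∀ᵐ x ∂(volume.restrict F), DensityPt F x := by
  filter_upwards [Besicovitch.ae_tendsto_measure_inter_div volume F] with x hx
  refine hx.congr' ?_
  filter_upwards [self_mem_nhdsWithin] with ρ (hρ : ρ ∈ Ioi 0)
  rw [vol_inter_closedBall_eq _ _ hρ, vol_closedBall_eq _ hρ]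

lemma smallDef {S : Set (Euc n)} {x : Euc n} (hS : MeasurableSet S)
    (h : DensityPt S x) {δ : ℝ} (hδ : 0 < δ) :
    ∀ᶠ ρ in 𝓝[>] (0 : ℝ),
      volume (ball x ρ \ S) ≤ ENNReal.ofReal δ * volume (ball x ρ) := by
  set δ' : ℝ := min δ 1 with hδ'
  have hδ'pos : 0 < δ' := lt_min hδ one_pos
  have hδ'le : ENNReal.ofReal δ' ≤ 1 := ENNReal.ofReal_le_one.2 (min_le_right δ 1)
  have hlt : (1 : ℝ≥0∞) - ENNReal.ofReal δ' < 1 :=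
    ENNReal.sub_lt_self one_ne_top one_ne_zero (by simpa using hδ'pos)
  filter_upwards [h.eventually (eventually_gt_nhds hlt), self_mem_nhdsWithin]
    with ρ h1 (h2 : ρ ∈ Ioi 0)
  have hb0 : volume (ball x ρ) ≠ 0 := vol_ball_ne_zero x h2
  have hbt : volume (ball x ρ) ≠ ∞ := vol_ball_ne_top x ρ
  have hmul : (1 - ENNReal.ofReal δ') * volume (ball x ρ) ≤ volume (S ∩ ball x ρ) :=
    ((ENNReal.lt_div_iff_mul_lt (Or.inl hb0) (Or.inl hbt)).1 h1).le
  have hdiff : volume (ball x ρ \ S) = volume (ball x ρ) - volume (S ∩ ball x ρ) := by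
    rw [(diff_inter_self_eq_diff (s := ball x ρ) (t := S)).symm]
    exact measure_diff inter_subset_right (hS.inter measurableSet_ball).nullMeasurableSet
      (ne_top_of_le_ne_top hbt (measure_mono inter_subset_right))
  rw [hdiff]
  calc volume (ball x ρ) - volume (S ∩ ball x ρ)
      ≤ volume (ball x ρ) - (1 - ENNReal.ofReal δ') * volume (ball x ρ) :=
        tsub_le_tsub_left hmul _
    _ ≤ ENNReal.ofReal δ' * volume (ball x ρ) := by
        rw [tsub_le_iff_left]
        calc volume (ball x ρ) = 1 * volume (ball x ρ) := (one_mul _).symm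
          _ ≤ ((1 - ENNReal.ofReal δ') + ENNReal.ofReal δ') * volume (ball x ρ) := by
              gcongr
              exact le_tsub_add
          _ = (1 - ENNReal.ofReal δ') * volume (ball x ρ)
              + ENNReal.ofReal δ' * volume (ball x ρ) := add_mul _ _ _
    _ ≤ ENNReal.ofReal δ * volume (ball x ρ) := by
        gcongr
        exact min_le_left _ _

lemma exists_near {T : Set (Euc n)} {x : Euc n} {ε : ℝ} (hε : 0 < ε)
    (hsmall : ∀ᶠ ρ in 𝓝[>] (0 : ℝ),
      volume (ball x ρ \ T) ≤ ENNReal.ofReal ((ε / (1 + ε)) ^ n / 2) * volume (ball x ρ)) :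
    ∃ r₂ > 0, ∀ y : Euc n, 0 < dist y x → dist y x < r₂ →
      ∃ y' ∈ T, dist y' y < ε * dist y x := by
  obtain ⟨r₀, hr₀pos, hsub⟩ := Metric.mem_nhdsWithin_iff.1 hsmall
  have h1ε : (0:ℝ) < 1 + ε := by linarith
  refine ⟨r₀ / (1 + ε), by positivity, fun y hd hdr => ?_⟩
  by_contra hcon
  push_neg at hcon
  set d := dist y x with hdd
  have hball : ball y (ε * d) ⊆ ball x ((1 + ε) * d) \ T := by
    intro z hz
    constructor
    · have : dist z x ≤ dist z y + dist y x := dist_triangle _ _ _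
      have hzy : dist z y < ε * d := hz
      simp only [mem_ball]
      nlinarith
    · intro hzT
      exact absurd hz (by simpa using (hcon z hzT).not_gt)
  have hρ : (0:ℝ) < (1 + ε) * d := by positivity
  have hρr : (1 + ε) * d < r₀ := by
    have := (lt_div_iff₀ h1ε).1 hdr
    linarith
  have hkey : volume (ball x ((1+ε)*d) \ T)
      ≤ ENNReal.ofReal ((ε / (1 + ε)) ^ n / 2) * volume (ball x ((1+ε)*d)) := by
    refine hsub ⟨?_, hρ⟩
    rw [mem_ball, Real.dist_eq, sub_zero, abs_of_pos hρ]
    exact hρr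
  have hle : volume (ball y (ε * d)) ≤
      ENNReal.ofReal ((ε / (1 + ε)) ^ n / 2) * volume (ball x ((1+ε)*d)) :=
    le_trans (measure_mono hball) hkey
  have hεd : (0:ℝ) < ε * d := by positivity
  rw [vol_ball y hεd, vol_ball x hρ, ← mul_assoc, ← ENNReal.ofReal_mul (by positivity)] at hle
  have hV0 : volume (ball (0 : Euc n) 1) ≠ 0 := vol_ball_ne_zero _ one_pos
  have hVt : volume (ball (0 : Euc n) 1) ≠ ∞ := vol_ball_ne_top _ _
  have hle2 : ((ε * d) ^ n : ℝ) ≤ (ε / (1 + ε)) ^ n / 2 * ((1 + ε) * d) ^ n := by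
    have := (ENNReal.mul_le_mul_iff_left hV0 hVt).1 hle
    exact (ENNReal.ofReal_le_ofReal_iff (by positivity)).1 this
  have heq : (ε / (1 + ε)) ^ n / 2 * ((1 + ε) * d) ^ n = (ε * d) ^ n / 2 := by
    have hne : ((1 + ε) : ℝ) ^ n ≠ 0 := pow_ne_zero n h1ε.ne'
    rw [div_pow, mul_pow, mul_pow]
    field_simp
  rw [heq] at hle2
  have : (0:ℝ) < (ε * d) ^ n := by positivity
  linarith

lemma hasFDerivWithinAt_piece {E : Set (Euc n)} {Φ : Euc n → Euc n}
    {L : Euc n →L[ℝ] Euc n} {x : Euc n} {M : ℝ} (hM : 0 ≤ M)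
    (hLip : ∀ y ∈ E, ∀ z ∈ E, dist (Φ y) (Φ z) ≤ M * dist y z)
    (hx : x ∈ E) (hE : MeasurableSet E)
    (hap : HasApproxDerivAt Φ L x) (hd : DensityPt E x) :
    HasFDerivWithinAt Φ L E x := by
  obtain ⟨S, hSm, hSd, htend⟩ := hap
  rw [HasFDerivWithinAt, hasFDerivAtFilter_iff_isLittleO, Asymptotics.isLittleO_iff]
  intro c hc
  set K := M + ‖L‖ + 1 with hK
  have hKpos : 0 < K := by positivity
  set ε' := min 1 (c / (3 * K)) with hε'
  have hε'pos : 0 < ε' := lt_min one_pos (by positivity)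
  have hε'le1 : ε' ≤ 1 := min_le_left _ _
  -- the set S with the limit bound
  have hev : ∀ᶠ y in 𝓝[S \ {x}] x, ‖Φ y - Φ x - L (y - x)‖ / ‖y - x‖ < c / 3 :=
    htend.eventually (eventually_lt_nhds (by positivity))
  obtain ⟨r₁, hr₁pos, hsub1⟩ := Metric.mem_nhdsWithin_iff.1 hev
  -- small density defect of T = S ∩ E
  set δ₀ := (ε' / (1 + ε')) ^ n / 2 with hδ₀
  have hδ₀pos : 0 < δ₀ := by positivity
  have hsmallS := smallDef hSm hSd (half_pos hδ₀pos)
  have hsmallE := smallDef hE hd (half_pos hδ₀pos)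
  have hsmallT : ∀ᶠ ρ in 𝓝[>] (0 : ℝ),
      volume (ball x ρ \ (S ∩ E)) ≤ ENNReal.ofReal δ₀ * volume (ball x ρ) := by
    filter_upwards [hsmallS, hsmallE] with ρ h1 h2
    calc volume (ball x ρ \ (S ∩ E))
        ≤ volume ((ball x ρ \ S) ∪ (ball x ρ \ E)) := by
          refine measure_mono fun z hz => ?_
          rcases not_and_or.1 hz.2 with h | h
          · exact Or.inl ⟨hz.1, h⟩
          · exact Or.inr ⟨hz.1, h⟩
      _ ≤ volume (ball x ρ \ S) + volume (ball x ρ \ E) := measure_union_le _ _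
      _ ≤ ENNReal.ofReal (δ₀/2) * volume (ball x ρ) + ENNReal.ofReal (δ₀/2) * volume (ball x ρ) :=
          add_le_add h1 h2
      _ = ENNReal.ofReal δ₀ * volume (ball x ρ) := by
          rw [← add_mul, ← ENNReal.ofReal_add (by positivity) (by positivity)]
          norm_num
  obtain ⟨r₂, hr₂pos, hnear⟩ := exists_near hε'pos hsmallT
  set r := min r₂ (r₁ / 2) with hr
  have hrpos : 0 < r := lt_min hr₂pos (by positivity)
  rw [Filter.prod_pure, Filter.eventually_map]; dsimp only; rw [eventually_iff, Metric.mem_nhdsWithin_iff]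
  refine ⟨r, hrpos, fun y hy => ?_⟩
  obtain ⟨hyb, hyE⟩ := hy
  rcases eq_or_ne y x with rfl | hyx
  · simp
  · set d := dist y x with hdd
    have hdpos : 0 < d := dist_pos.2 hyx
    have hdr : d < r := hyb
    obtain ⟨y', ⟨hy'S, hy'E⟩, hy'near⟩ :=
      hnear y hdpos (lt_of_lt_of_le hdr (min_le_left _ _))
    have hy'yd : dist y' y < d := lt_of_lt_of_le hy'near (by nlinarith)
    have hy'x : y' ≠ x := by
      intro h
      rw [h, dist_comm] at hy'yd
      exact absurd rfl hy'yd.ne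
    have hy'xd : dist y' x < 2 * d := by
      have := dist_triangle y' y x
      rw [dist_comm y x] at hdd
      nlinarith [hy'near, mul_le_of_le_one_left hdpos.le hε'le1]
    have hy'r₁ : dist y' x < r₁ := by
      have : d < r₁ / 2 := lt_of_lt_of_le hdr (min_le_right _ _)
      linarith
    have hbound2 : ‖Φ y' - Φ x - L (y' - x)‖ ≤ c / 3 * ‖y' - x‖ := by
      have hq := hsub1 ⟨by simpa [mem_ball] using hy'r₁, hy'S, hy'x⟩
      have hny : (0:ℝ) < ‖y' - x‖ := by
        rw [← dist_eq_norm]; exact dist_pos.2 hy'x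
      calc ‖Φ y' - Φ x - L (y' - x)‖
          = ‖Φ y' - Φ x - L (y' - x)‖ / ‖y' - x‖ * ‖y' - x‖ := by
            field_simp
        _ ≤ c / 3 * ‖y' - x‖ := by
            apply mul_le_mul_of_nonneg_right (le_of_lt hq) hny.le
    have hterm1 : dist (Φ y) (Φ y') ≤ M * (ε' * d) := by
      calc dist (Φ y) (Φ y') ≤ M * dist y y' := hLip y hyE y' hy'E
        _ ≤ M * (ε' * d) := by
            rw [dist_comm]
            exact mul_le_mul_of_nonneg_left hy'near.le hM
    have hterm3 : ‖L (y' - y)‖ ≤ ‖L‖ * (ε' * d) := by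
      calc ‖L (y' - y)‖ ≤ ‖L‖ * ‖y' - y‖ := L.le_opNorm _
        _ ≤ ‖L‖ * (ε' * d) := by
            rw [← dist_eq_norm]
            exact mul_le_mul_of_nonneg_left hy'near.le (norm_nonneg L)
    have hident : Φ y - Φ x - L (y - x)
        = (Φ y - Φ y') + (Φ y' - Φ x - L (y' - x)) + L (y' - y) := by
      have : L (y' - y) = L (y' - x) - L (y - x) := by
        rw [← map_sub]; congr 1; abel
      rw [this]; abel
    have hnorm : ‖Φ y - Φ x - L (y - x)‖
        ≤ ‖Φ y - Φ y'‖ + ‖Φ y' - Φ x - L (y' - x)‖ + ‖L (y' - y)‖ := by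
      rw [hident]; exact norm_add₃_le
    have hdn : ‖y - x‖ = d := (dist_eq_norm y x).symm
    simp only [mem_setOf_eq]
    rw [hdn]
    have hprod : (M + ‖L‖) * ε' ≤ c / 3 := by
      have h1 : M + ‖L‖ ≤ K := by rw [hK]; linarith
      have h2 : ε' ≤ c / (3 * K) := min_le_right _ _
      calc (M + ‖L‖) * ε' ≤ K * (c / (3 * K)) := by
            apply mul_le_mul h1 h2 hε'pos.le hKpos.le
        _ = c / 3 := by field_simp
    have hdist1 : ‖Φ y - Φ y'‖ = dist (Φ y) (Φ y') := (dist_eq_norm _ _).symm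
    have h2d : ‖y' - x‖ ≤ 2 * d := by rw [← dist_eq_norm]; exact hy'xd.le
    have hcnn : (0:ℝ) ≤ c / 3 := by positivity
    calc ‖Φ y - Φ x - L (y - x)‖
        ≤ ‖Φ y - Φ y'‖ + ‖Φ y' - Φ x - L (y' - x)‖ + ‖L (y' - y)‖ := hnorm
      _ ≤ M * (ε' * d) + c / 3 * (2 * d) + ‖L‖ * (ε' * d) := by
          rw [hdist1]
          refine add_le_add (add_le_add hterm1 (le_trans hbound2 ?_)) hterm3
          exact mul_le_mul_of_nonneg_left h2d hcnn
      _ = ((M + ‖L‖) * ε') * d + c / 3 * (2 * d) := by ring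
      _ ≤ (c / 3) * d + c / 3 * (2 * d) := by
          refine add_le_add_left (mul_le_mul_of_nonneg_right hprod hdpos.le) _
      _ = c * d := by ring

set_option maxHeartbeats 2000000 in
lemma exists_decomposition {Ω : Set (Euc n)} (hΩ : IsOpen Ω) {Φ : Euc n → Euc n}
    (hcont : ContinuousOn Φ Ω) (D : Euc n → (Euc n →L[ℝ] Euc n))
    (hD : ∀ᵐ x ∂(volume.restrict Ω), HasApproxDerivAt Φ (D x) x) :
    ∃ K : ℕ → Set (Euc n), (∀ k, MeasurableSet (K k)) ∧ (∀ k, K k ⊆ Ω) ∧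
      Pairwise (Function.onFun Disjoint K) ∧ volume (Ω \ ⋃ k, K k) = 0 ∧
      ∀ k, ∀ x ∈ K k, HasFDerivWithinAt Φ (D x) (K k) x := by
  classical
  -- measurable globalization of Φ
  set Φt : Euc n → Euc n := Ω.piecewise Φ (fun _ => 0) with hΦt
  have hΦteq : ∀ x ∈ Ω, Φt x = Φ x := fun x hx => Set.piecewise_eq_of_mem _ _ _ hx
  have hΦtm : Measurable Φt := by
    apply measurable_of_isOpen
    intro U hU
    rw [Set.piecewise_preimage]
    exact ((inter_comm Ω (Φ ⁻¹' U) ▸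
        (hcont.isOpen_inter_preimage hΩ hU).measurableSet : MeasurableSet (Φ ⁻¹' U ∩ Ω)).union
      ((measurable_const hU.measurableSet).diff hΩ.measurableSet))
  -- the "bad" measure function
  set bad : ℕ → Euc n → ℝ → ℝ≥0∞ := fun i x r =>
    volume {y | y ∈ Ω ∧ dist y x < r ∧ (i : ℝ) * dist y x < dist (Φt y) (Φt x)} with hbaddef
  have hbadmeas : ∀ (i : ℕ) (r : ℝ), Measurable fun x => bad i x r := by
    intro i r
    have hT : MeasurableSet {p : Euc n × Euc n |
        p.2 ∈ Ω ∧ dist p.2 p.1 < r ∧ (i : ℝ) * dist p.2 p.1 < dist (Φt p.2) (Φt p.1)} := by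
      refine (hΩ.measurableSet.preimage measurable_snd).inter (MeasurableSet.inter ?_ ?_)
      · exact measurableSet_lt (measurable_snd.dist measurable_fst) measurable_const
      · exact measurableSet_lt
          (measurable_const.mul (measurable_snd.dist measurable_fst))
          ((hΦtm.comp measurable_snd).dist (hΦtm.comp measurable_fst))
    exact measurable_measure_prodMk_left hT
  set δ : ℝ := 2 ^ n / (2 * (2 ^ n + 3 ^ n)) with hδdef
  have hδpos : 0 < δ := by positivity
  -- interior approximation of Ω
  set Om : ℕ → Set (Euc n) := fun i => (Metric.cthickening (1 / (i : ℝ)) Ωᶜ)ᶜ with hOmdef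
  have hOmopen : ∀ i, IsOpen (Om i) := fun i => Metric.isClosed_cthickening.isOpen_compl
  have hOmsub : ∀ (i : ℕ) (x : Euc n), x ∈ Om i → ∀ y, dist y x ≤ 1 / (i : ℝ) → y ∈ Ω := by
    intro i x hx y hy
    by_contra hyΩ
    exact hx (Metric.mem_cthickening_of_dist_le x y (1 / (i : ℝ)) Ωᶜ hyΩ (by rwa [dist_comm] at hy))
  -- the good sets
  set G : ℕ → Set (Euc n) := fun i => {x | x ∈ Ω ∧ x ∈ Om i ∧
    ∀ q : ℚ, 0 < (q : ℝ) → (q : ℝ) < 1 / (i : ℝ) →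
      bad i x q ≤ ENNReal.ofReal δ * volume (ball x ((q : ℝ) / 2))} with hGdef
  have hGmeas : ∀ i, MeasurableSet (G i) := by
    intro i
    have hGeq : G i = (Ω ∩ Om i) ∩ ⋂ (q : ℚ), ⋂ (_ : 0 < (q : ℝ) ∧ (q : ℝ) < 1 / (i : ℝ)),
        {x | bad i x q ≤ ENNReal.ofReal δ * volume (ball x ((q : ℝ) / 2))} := by
      ext x
      simp only [hGdef, mem_setOf_eq, mem_inter_iff, mem_iInter]
      tauto
    rw [hGeq]
    refine (hΩ.measurableSet.inter (hOmopen i).measurableSet).inter ?_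
    refine MeasurableSet.iInter fun q => MeasurableSet.iInter fun _ => ?_
    have : {x : Euc n | bad i x q ≤ ENNReal.ofReal δ * volume (ball x ((q : ℝ) / 2))}
        = {x : Euc n | bad i x q
            ≤ ENNReal.ofReal δ * volume (ball (0 : Euc n) ((q : ℝ) / 2))} := by
      ext x
      rw [mem_setOf_eq, Measure.addHaar_ball_center volume x]
      rfl
    rw [this]
    exact measurableSet_le (hbadmeas i _) measurable_const
  -- real-radius version of the defining property of G
  have hGreal : ∀ (i : ℕ), ∀ x ∈ G i, ∀ r : ℝ, 0 < r → r < 1 / (2 * (i : ℝ)) →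
      bad i x r ≤ ENNReal.ofReal δ * volume (ball x r) := by
    intro i x hxG r hr hr2
    have hipos : (0 : ℝ) < (i : ℝ) := by
      rcases Nat.eq_zero_or_pos i with rfl | hi
      · exfalso
        rw [Nat.cast_zero, mul_zero, _root_.div_zero] at hr2
        linarith
      · exact_mod_cast hi
    have hri : r < 1 / (i : ℝ) := by
      apply lt_trans hr2
      rw [div_lt_div_iff₀ (by positivity) hipos]
      nlinarith
    obtain ⟨q, hq1, hq2⟩ := exists_rat_btwn (lt_min (by linarith : r < 2 * r) hri)
    have hq0 : 0 < (q : ℝ) := lt_trans hr hq1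
    have hq2r : (q : ℝ) < 2 * r := lt_of_lt_of_le hq2 (min_le_left _ _)
    have hqi : (q : ℝ) < 1 / (i : ℝ) := lt_of_lt_of_le hq2 (min_le_right _ _)
    calc bad i x r ≤ bad i x q := by
          refine measure_mono fun y hy => ⟨hy.1, lt_trans hy.2.1 hq1, hy.2.2⟩
      _ ≤ ENNReal.ofReal δ * volume (ball x ((q : ℝ) / 2)) := hxG.2.2 q hq0 hqi
      _ ≤ ENNReal.ofReal δ * volume (ball x r) := by
          exact mul_le_mul_right (measure_mono (ball_subset_ball (by linarith : (q:ℝ)/2 ≤ r))) _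
  -- Lipschitz property on G i at small scales
  have hGlip : ∀ (i : ℕ), ∀ x ∈ G i, ∀ z ∈ G i, dist x z < 1 / (6 * (i : ℝ)) →
      dist (Φ x) (Φ z) ≤ 5 * (i : ℝ) * dist x z := by
    intro i x hxG z hzG hxz
    rcases eq_or_ne x z with rfl | hne
    · simp
    have hipos : (0 : ℝ) < (i : ℝ) := by
      rcases Nat.eq_zero_or_pos i with rfl | hi
      · exfalso
        rw [Nat.cast_zero, mul_zero, _root_.div_zero] at hxz
        exact absurd hxz dist_nonneg.not_gt
      · exact_mod_cast hi
    set d := dist x z with hd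
    have hdpos : 0 < d := dist_pos.2 hne
    have h6 : d * (6 * (i : ℝ)) < 1 := (lt_div_iff₀ (by positivity)).1 hxz
    have hdi : 0 < d * (i : ℝ) := mul_pos hdpos hipos
    have h2dr : 2 * d < 1 / (2 * (i : ℝ)) := by
      rw [lt_div_iff₀ (by positivity)]
      nlinarith
    have h3dr : 3 * d < 1 / (2 * (i : ℝ)) := by
      rw [lt_div_iff₀ (by positivity)]
      nlinarith
    have hb1 := hGreal i x hxG (2 * d) (by positivity) h2dr
    have hb2 := hGreal i z hzG (3 * d) (by positivity) h3dr
    have hsubΩ : ball x (2 * d) ⊆ Ω := by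
      intro y hy
      refine hOmsub i x hxG.2.1 y ?_
      have h1 : dist y x < 2 * d := hy
      have h2 : 2 * d ≤ 1 / (i : ℝ) := by
        rw [le_div_iff₀ hipos]
        nlinarith
      linarith
    set B1 := {y | y ∈ Ω ∧ dist y x < 2 * d ∧ (i : ℝ) * dist y x < dist (Φt y) (Φt x)} with hB1
    set B2 := {y | y ∈ Ω ∧ dist y z < 3 * d ∧ (i : ℝ) * dist y z < dist (Φt y) (Φt z)} with hB2
    have hV0 : volume (ball (0 : Euc n) 1) ≠ 0 := vol_ball_ne_zero _ one_pos
    have hVt : volume (ball (0 : Euc n) 1) ≠ ∞ := vol_ball_ne_top _ _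
    have hvol : volume B1 + volume B2 < volume (ball x (2 * d)) := by
      have hcalc : ENNReal.ofReal δ * volume (ball x (2 * d))
          + ENNReal.ofReal δ * volume (ball z (3 * d))
          = ENNReal.ofReal ((2 * d) ^ n / 2) * volume (ball (0 : Euc n) 1) := by
        rw [vol_ball x (by positivity : (0:ℝ) < 2 * d), vol_ball z (by positivity : (0:ℝ) < 3 * d)]
        rw [← mul_assoc, ← mul_assoc, ← ENNReal.ofReal_mul hδpos.le,
          ← ENNReal.ofReal_mul hδpos.le, ← add_mul, ← ENNReal.ofReal_add (by positivity) (by positivity)]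
        congr 2
        have h23 : (2:ℝ) ^ n + 3 ^ n > 0 := by positivity
        rw [hδdef]
        rw [mul_pow, mul_pow]
        field_simp
      calc volume B1 + volume B2
          ≤ ENNReal.ofReal δ * volume (ball x (2 * d))
            + ENNReal.ofReal δ * volume (ball z (3 * d)) := add_le_add hb1 hb2
        _ = ENNReal.ofReal ((2 * d) ^ n / 2) * volume (ball (0 : Euc n) 1) := hcalc
        _ < ENNReal.ofReal ((2 * d) ^ n) * volume (ball (0 : Euc n) 1) := by
            rw [ENNReal.mul_lt_mul_iff_left hV0 hVt]
            rw [ENNReal.ofReal_lt_ofReal_iff (by positivity)]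
            have : (0:ℝ) < (2 * d) ^ n := by positivity
            linarith
        _ = volume (ball x (2 * d)) := (vol_ball x (by positivity)).symm
    have hex : ∃ y, y ∈ ball x (2 * d) ∧ y ∉ B1 ∧ y ∉ B2 := by
      by_contra hcon
      push_neg at hcon
      have hsub : ball x (2 * d) ⊆ B1 ∪ B2 := by
        intro y hy
        by_cases h1 : y ∈ B1
        · exact Or.inl h1
        · exact Or.inr (hcon y hy h1)
      exact absurd (lt_of_le_of_lt (le_trans (measure_mono hsub) (measure_union_le _ _)) hvol)
        (lt_irrefl _)
    obtain ⟨y, hyb, hyB1, hyB2⟩ := hex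
    have hyΩ : y ∈ Ω := hsubΩ hyb
    have hyx : dist y x < 2 * d := hyb
    have hyz : dist y z < 3 * d := by
      calc dist y z ≤ dist y x + dist x z := dist_triangle _ _ _
        _ < 2 * d + d := by linarith
        _ = 3 * d := by ring
    have hgood1 : dist (Φt y) (Φt x) ≤ (i : ℝ) * dist y x := by
      by_contra h
      exact hyB1 ⟨hyΩ, hyx, lt_of_not_ge h⟩
    have hgood2 : dist (Φt y) (Φt z) ≤ (i : ℝ) * dist y z := by
      by_contra h
      exact hyB2 ⟨hyΩ, hyz, lt_of_not_ge h⟩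
    have hxΩ : x ∈ Ω := hxG.1
    have hzΩ : z ∈ Ω := hzG.1
    calc dist (Φ x) (Φ z) = dist (Φt x) (Φt z) := by rw [hΦteq x hxΩ, hΦteq z hzΩ]
      _ ≤ dist (Φt x) (Φt y) + dist (Φt y) (Φt z) := dist_triangle _ _ _
      _ ≤ (i : ℝ) * dist y x + (i : ℝ) * dist y z := by
          rw [dist_comm (Φt x) (Φt y)]
          exact add_le_add hgood1 hgood2
      _ ≤ (i : ℝ) * (2 * d) + (i : ℝ) * (3 * d) := by
          refine add_le_add ?_ ?_ <;> exact mul_le_mul_of_nonneg_left (by linarith) hipos.le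
      _ = 5 * (i : ℝ) * d := by ring
  -- every point with an approximate derivative lies in some G i
  have hcover : ∀ x ∈ Ω, HasApproxDerivAt Φ (D x) x → ∃ i : ℕ, 1 ≤ i ∧ x ∈ G i := by
    rintro x hxΩ ⟨S, hSm, hSd, htend⟩
    obtain ⟨R, hRpos, hRsub⟩ := Metric.isOpen_iff.1 hΩ x hxΩ
    have hev : ∀ᶠ y in 𝓝[S \ {x}] x, ‖Φ y - Φ x - D x (y - x)‖ / ‖y - x‖ < 1 :=
      htend.eventually (eventually_lt_nhds one_pos)
    obtain ⟨r₁, hr₁pos, hsub1⟩ := Metric.mem_nhdsWithin_iff.1 hev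
    have hδ2pos : 0 < δ / 2 ^ n := by positivity
    obtain ⟨r₃, hr₃pos, hsub3⟩ := Metric.mem_nhdsWithin_iff.1 (smallDef hSm hSd hδ2pos)
    obtain ⟨i, hi⟩ := exists_nat_gt
      (max (max (1 / R) (‖D x‖ + 1)) (max (1 / r₁) (1 / r₃)) + 1)
    have hstep : ∀ a : ℝ, a ≤ max (max (1 / R) (‖D x‖ + 1)) (max (1 / r₁) (1 / r₃)) →
        a < (i : ℝ) := by
      intro a ha
      calc a ≤ max (max (1 / R) (‖D x‖ + 1)) (max (1 / r₁) (1 / r₃)) := ha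
        _ < max (max (1 / R) (‖D x‖ + 1)) (max (1 / r₁) (1 / r₃)) + 1 := lt_add_one _
        _ < (i : ℝ) := hi
    have hR0 : (0:ℝ) < 1 / R := one_div_pos.2 hRpos
    have hi1 : 1 ≤ i := by
      by_contra h
      push_neg at h
      interval_cases i
      · have h2 := hstep (1 / R) ((le_max_left _ _).trans (le_max_left _ _))
        rw [Nat.cast_zero] at h2
        linarith
    have hipos : (0:ℝ) < (i:ℝ) := by exact_mod_cast hi1
    have hinv : ∀ a : ℝ, 0 < a → 1 / a < (i : ℝ) → 1 / (i:ℝ) < a := by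
      intro a ha hlt
      rw [div_lt_iff₀ hipos]
      rw [div_lt_iff₀ ha] at hlt
      nlinarith
    have hiR : 1 / (i:ℝ) < R :=
      hinv R hRpos (hstep _ ((le_max_left _ _).trans (le_max_left _ _)))
    have hir₁ : 1 / (i:ℝ) < r₁ :=
      hinv r₁ hr₁pos (hstep _ ((le_max_left _ _).trans (le_max_right _ _)))
    have hir₃ : 1 / (i:ℝ) < r₃ :=
      hinv r₃ hr₃pos (hstep _ ((le_max_right _ _).trans (le_max_right _ _)))
    have hiD : ‖D x‖ + 1 ≤ (i:ℝ) :=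
      (hstep _ ((le_max_right _ _).trans (le_max_left _ _))).le
    refine ⟨i, hi1, hxΩ, ?_, ?_⟩
    · -- x ∈ Om i
      intro hmem
      have h1 : EMetric.infEdist x Ωᶜ ≤ ENNReal.ofReal (1 / (i:ℝ)) :=
        Metric.mem_cthickening_iff.1 hmem
      have h2 : EMetric.infEdist x Ωᶜ < ENNReal.ofReal R :=
        lt_of_le_of_lt h1 (ENNReal.ofReal_lt_ofReal_iff hRpos |>.2 hiR)
      obtain ⟨y, hyc, hyd⟩ := EMetric.infEdist_lt_iff.1 h2
      exact hyc (hRsub (mem_ball'.2 (edist_lt_ofReal.1 hyd)))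
    · -- the quantitative bad-set bound
      intro q hq0 hqi
      have hqr₁ : (q:ℝ) < r₁ := lt_trans hqi hir₁
      have hqr₃ : (q:ℝ) < r₃ := lt_trans hqi hir₃
      have hsubbad : {y | y ∈ Ω ∧ dist y x < (q:ℝ) ∧
          (i : ℝ) * dist y x < dist (Φt y) (Φt x)} ⊆ ball x (q:ℝ) \ S := by
        rintro y ⟨hyΩ, hyq, hyb⟩
        refine ⟨hyq, fun hyS => ?_⟩
        rcases eq_or_ne y x with rfl | hyx
        · simp at hyb
        · have hyS' : y ∈ S \ {x} := ⟨hyS, hyx⟩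
          have hq := hsub1 ⟨mem_ball.2 (lt_trans hyq hqr₁), hyS'⟩
          have hny : (0:ℝ) < ‖y - x‖ := by rw [← dist_eq_norm]; exact dist_pos.2 hyx
          have hbound : ‖Φ y - Φ x - D x (y - x)‖ < ‖y - x‖ := by
            have := (div_lt_one hny).1 hq
            linarith
          have hΦyx : dist (Φ y) (Φ x) ≤ (‖D x‖ + 1) * dist y x := by
            rw [dist_eq_norm, dist_eq_norm]
            calc ‖Φ y - Φ x‖ ≤ ‖Φ y - Φ x - D x (y - x)‖ + ‖D x (y - x)‖ := by
                  refine le_trans (by rw [sub_add_cancel]) (norm_add_le _ _)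
              _ ≤ ‖y - x‖ + ‖D x‖ * ‖y - x‖ := add_le_add hbound.le ((D x).le_opNorm _)
              _ = (‖D x‖ + 1) * ‖y - x‖ := by ring
          rw [hΦteq y hyΩ, hΦteq x hxΩ] at hyb
          have : dist (Φ y) (Φ x) ≤ (i:ℝ) * dist y x := by
            refine le_trans hΦyx ?_
            exact mul_le_mul_of_nonneg_right hiD dist_nonneg
          linarith
      have hq3 : bad i x q ≤ ENNReal.ofReal (δ / 2 ^ n) * volume (ball x (q:ℝ)) := by
        refine le_trans (measure_mono hsubbad) ?_
        refine hsub3 ⟨?_, hq0⟩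
        rw [mem_ball, Real.dist_eq, sub_zero, abs_of_pos hq0]
        exact hqr₃
      refine le_trans hq3 (le_of_eq ?_)
      rw [vol_ball x hq0, vol_ball x (by positivity : (0:ℝ) < (q:ℝ)/2)]
      rw [← mul_assoc, ← mul_assoc, ← ENNReal.ofReal_mul (by positivity),
        ← ENNReal.ofReal_mul hδpos.le]
      have hre : δ / 2 ^ n * (q:ℝ) ^ n = δ * ((q:ℝ) / 2) ^ n := by
        rw [div_pow]
        ring
      rw [hre]
  -- the full-measure core with approximate differentiability
  have hbadset : volume ({x | ¬ HasApproxDerivAt Φ (D x) x} ∩ Ω) = 0 := by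
    have h := hD
    rw [ae_iff, Measure.restrict_apply' hΩ.measurableSet] at h
    exact h
  set Acore : Set (Euc n) :=
    Ω \ toMeasurable volume ({x | ¬ HasApproxDerivAt Φ (D x) x} ∩ Ω) with hAdef
  have hAmeas : MeasurableSet Acore := hΩ.measurableSet.diff (measurableSet_toMeasurable _ _)
  have hAsub : Acore ⊆ Ω := diff_subset
  have hAap : ∀ x ∈ Acore, HasApproxDerivAt Φ (D x) x := by
    intro x hx
    by_contra h
    exact hx.2 (subset_toMeasurable _ _ ⟨h, hx.1⟩)
  have hAnull : volume (Ω \ Acore) = 0 := by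
    refine measure_mono_null (fun x hx => ?_) (by
      rw [measure_toMeasurable]
      exact hbadset)
    rcases hx with ⟨hx1, hx2⟩
    by_contra h
    exact hx2 ⟨hx1, h⟩
  -- countable dense sequence
  have hu : DenseRange (TopologicalSpace.denseSeq (Euc n)) :=
    TopologicalSpace.denseRange_denseSeq _
  set u : ℕ → Euc n := TopologicalSpace.denseSeq (Euc n) with hudef
  -- the pieces
  set F : ℕ × ℕ → Set (Euc n) := fun p =>
    G (p.1 + 1) ∩ ball (u p.2) (1 / (13 * ((p.1 : ℝ) + 1))) ∩ Acore with hFdef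
  have hFmeas : ∀ p, MeasurableSet (F p) :=
    fun p => ((hGmeas _).inter measurableSet_ball).inter hAmeas
  have hFsub : ∀ p, F p ⊆ Ω := fun p x hx => hAsub hx.2
  have hFlip : ∀ p, ∀ x ∈ F p, ∀ z ∈ F p,
      dist (Φ x) (Φ z) ≤ (5 * ((p.1 : ℝ) + 1)) * dist x z := by
    intro p x hx z hz
    have hcast : ((p.1 + 1 : ℕ) : ℝ) = (p.1 : ℝ) + 1 := by push_cast; ring
    have hxz : dist x z < 1 / (6 * ((p.1 + 1 : ℕ) : ℝ)) := by
      rw [hcast]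
      have h1 : dist x (u p.2) < 1 / (13 * ((p.1 : ℝ) + 1)) := mem_ball.1 hx.1.2
      have h2 : dist z (u p.2) < 1 / (13 * ((p.1 : ℝ) + 1)) := mem_ball.1 hz.1.2
      have h3 : dist x z ≤ dist x (u p.2) + dist (u p.2) z := dist_triangle _ _ _
      rw [dist_comm (u p.2) z] at h3
      have hp1 : (0:ℝ) < (p.1 : ℝ) + 1 := by positivity
      rw [lt_div_iff₀ (by positivity)] at h1 h2 ⊢
      nlinarith [dist_nonneg (x := x) (y := u p.2), dist_nonneg (x := z) (y := u p.2)]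
    have := hGlip (p.1 + 1) x hx.1.1 z hz.1.1 hxz
    rwa [hcast] at this
  have hFcover : Acore ⊆ ⋃ p, F p := by
    intro x hx
    obtain ⟨i, hi1, hiG⟩ := hcover x (hAsub hx) (hAap x hx)
    set k := i - 1 with hk
    have hki : k + 1 = i := Nat.succ_pred_eq_of_pos hi1
    obtain ⟨j, hj⟩ := hu.exists_dist_lt x (show (0:ℝ) < 1 / (13 * ((k : ℝ) + 1)) by positivity)
    refine mem_iUnion.2 ⟨(k, j), ⟨⟨?_, mem_ball.2 hj⟩, hx⟩⟩
    rwa [hki]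
  -- removing non-density points
  set N : ℕ × ℕ → Set (Euc n) := fun p =>
    toMeasurable volume ({x | ¬ DensityPt (F p) x} ∩ F p) with hNdef
  have hNnull : ∀ p, volume (N p) = 0 := by
    intro p
    rw [measure_toMeasurable]
    have h := ae_densityPt (F p)
    rwa [ae_iff, Measure.restrict_apply' (hFmeas p)] at h
  set F' : ℕ × ℕ → Set (Euc n) := fun p => F p \ N p with hF'def
  have hF'meas : ∀ p, MeasurableSet (F' p) :=
    fun p => (hFmeas p).diff (measurableSet_toMeasurable _ _)
  have hF'deriv : ∀ p, ∀ x ∈ F' p, HasFDerivWithinAt Φ (D x) (F p) x := by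
    intro p x hx
    have hxF : x ∈ F p := hx.1
    have hdens : DensityPt (F p) x := by
      by_contra h
      exact hx.2 (subset_toMeasurable _ _ ⟨h, hxF⟩)
    exact hasFDerivWithinAt_piece (M := 5 * ((p.1 : ℝ) + 1)) (by positivity)
      (hFlip p) hxF (hFmeas p) (hAap x hxF.2) hdens
  -- final disjointed family
  set e : ℕ ≃ ℕ × ℕ := (Denumerable.eqv (ℕ × ℕ)).symm with hedef
  set K : ℕ → Set (Euc n) := disjointed (fun k => F' (e k)) with hKdef
  have hKsub : ∀ k, K k ⊆ F' (e k) := fun k => disjointed_subset _ k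
  refine ⟨K, ?_, ?_, ?_, ?_, ?_⟩
  · exact fun k => MeasurableSet.disjointed (fun m => hF'meas _) k
  · exact fun k x hx => hFsub _ ((hKsub k hx).1)
  · exact disjoint_disjointed _
  · have hKU : ⋃ k, K k = ⋃ p, F' p := by
      rw [hKdef, iUnion_disjointed]
      exact e.surjective.iUnion_comp _
    rw [hKU]
    have hsub2 : Ω \ ⋃ p, F' p ⊆ (Ω \ Acore) ∪ ⋃ p, N p := by
      intro x hx
      by_cases hxA : x ∈ Acore
      · right
        obtain ⟨p, hp⟩ := mem_iUnion.1 (hFcover hxA)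
        refine mem_iUnion.2 ⟨p, ?_⟩
        by_contra hN
        exact hx.2 (mem_iUnion.2 ⟨p, hp, hN⟩)
      · exact Or.inl ⟨hx.1, hxA⟩
    refine measure_mono_null hsub2 (measure_union_null hAnull ?_)
    exact measure_iUnion_null fun p => hNnull p
  · intro k x hx
    exact (hF'deriv (e k) x (hKsub k hx)).mono ((hKsub k).trans diff_subset)

end CVProof

open CVProof in
theorem stmt3 (n : ℕ) (Ω : Set (Euc n)) (hΩ : IsOpen Ω) (Φ Ψ : Euc n → Euc n)
    (hcont : ContinuousOn Φ Ω) (hinj : InjOn Φ Ω)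
    (hΨcont : ContinuousOn Ψ (Φ '' Ω)) (hΨ : ∀ x ∈ Ω, Ψ (Φ x) = x)
    (hLusin : ∀ E ⊆ Ω, volume E = 0 → volume (Φ '' E) = 0)
    (D : Euc n → (Euc n →L[ℝ] Euc n))
    (hD : ∀ᵐ x ∂(volume.restrict Ω), HasApproxDerivAt Φ (D x) x)
    (g : Euc n → ℝ≥0∞) (hg : Measurable g) :
    ∫⁻ x in Ω, g x * ENNReal.ofReal |(D x).det| =
      ∫⁻ y in Φ '' Ω, g (Ψ y) := by
  obtain ⟨K, hKmeas, hKsub, hKdisj, hKnull, hKderiv⟩ :=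
    CVProof.exists_decomposition hΩ hcont D hD
  have hUsub : (⋃ k, K k) ⊆ Ω := iUnion_subset hKsub
  have hUae : (⋃ k, K k) =ᵐ[volume] Ω := by
    rw [ae_eq_set]
    constructor
    · rw [diff_eq_empty.2 hUsub]
      exact measure_empty
    · exact hKnull
  -- left side as a sum over pieces
  have hLHS : ∫⁻ x in Ω, g x * ENNReal.ofReal |(D x).det|
      = ∑' k, ∫⁻ x in K k, g x * ENNReal.ofReal |(D x).det| := by
    rw [← Measure.restrict_congr_set hUae]
    exact lintegral_iUnion₀ (fun k => (hKmeas k).nullMeasurableSet)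
      (hKdisj.mono fun i j h => h.aedisjoint) _
  -- each piece transforms by the change of variables formula
  have hpiece : ∀ k, ∫⁻ y in Φ '' K k, g (Ψ y)
      = ∫⁻ x in K k, g x * ENNReal.ofReal |(D x).det| := by
    intro k
    have hinjk : InjOn Φ (K k) := hinj.mono (hKsub k)
    rw [lintegral_image_eq_lintegral_abs_det_fderiv_mul volume (hKmeas k)
      (fun x hx => hKderiv k x hx) hinjk (fun y => g (Ψ y))]
    refine lintegral_congr_ae ((ae_restrict_iff' (hKmeas k)).2 (ae_of_all _ fun x hx => ?_))
    dsimp only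
    rw [hΨ x (hKsub k hx), mul_comm]
  -- the images are measurable and disjoint
  have himM : ∀ k, MeasurableSet (Φ '' K k) := fun k =>
    measurable_image_of_fderivWithin (hKmeas k) (fun x hx => hKderiv k x hx)
      (hinj.mono (hKsub k))
  have himdisj : Pairwise (Function.onFun Disjoint fun k => Φ '' K k) := by
    intro i j hij
    refine Set.disjoint_left.2 ?_
    rintro y ⟨a, haK, rfl⟩ ⟨b, hbK, hba⟩
    have hab : a = b := hinj (hKsub i haK) (hKsub j hbK) hba.symm
    exact Set.disjoint_left.1 (hKdisj hij) haK (hab ▸ hbK)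
  -- the union of images has full measure in Φ '' Ω
  have hImnull : volume (Φ '' Ω \ ⋃ k, Φ '' K k) = 0 := by
    refine measure_mono_null ?_ (hLusin (Ω \ ⋃ k, K k) diff_subset hKnull)
    rintro y ⟨⟨x, hxΩ, rfl⟩, hyn⟩
    refine ⟨x, ⟨hxΩ, fun hxU => ?_⟩, rfl⟩
    obtain ⟨k, hk⟩ := mem_iUnion.1 hxU
    exact hyn (mem_iUnion.2 ⟨k, mem_image_of_mem _ hk⟩)
  have hImae : (⋃ k, Φ '' K k) =ᵐ[volume] Φ '' Ω := by
    rw [ae_eq_set]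
    constructor
    · rw [diff_eq_empty.2 (iUnion_subset fun k => image_mono (hKsub k))]
      exact measure_empty
    · exact hImnull
  have hRHS : ∫⁻ y in Φ '' Ω, g (Ψ y) = ∑' k, ∫⁻ y in Φ '' K k, g (Ψ y) := by
    rw [← Measure.restrict_congr_set hImae]
    exact lintegral_iUnion₀ (fun k => (himM k).nullMeasurableSet)
      (himdisj.mono fun i j h => h.aedisjoint) _
  rw [hLHS, hRHS]
  exact (tsum_congr fun k => (hpiece k)).symm
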